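/- arXiv:1703.07589 — 3 statements merged into one kernel-verified Lean document; each statement's English description precedes it below -/
import Mathlib

section
/- Riccati downdate propagation: suppose P̃ = P - V C† Vᵀ ⪰ 0 with C ⪰ 0 and range(Vᵀ) ⊆ range(C), P ⪰ 0, and let F = Qx + AᵀPA, G = Qw + BᵀPB, H = Qxw + AᵀPB with [[Qx,Qxw],[Qxwᵀ,Qw]] ⪰ 0. Define V' := (Aᵀ - H G† Bᵀ) V and C' := C - Vᵀ B G† Bᵀ V. Then the downdated Riccati step satisfies (F - AᵀVC†VᵀA) - (H - AᵀVC†VᵀB)(G - BᵀVC†VᵀB)†(H - AᵀVC†VᵀB)ᵀ = (F - H G† Hᵀ) - V' C'† V'ᵀ. -/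
open Matrix

/-- The four Moore–Penrose conditions: `Dp` is the Moore–Penrose pseudoinverse of `D`. -/
def IsMP {α : Type*} [Fintype α] [DecidableEq α] (D Dp : Matrix α α ℝ) : Prop :=
  D * Dp * D = D ∧ Dp * D * Dp = Dp ∧ (D * Dp)ᵀ = D * Dp ∧ (Dp * D)ᵀ = Dp * D

section helpers
variable {α : Type*} [Fintype α] [DecidableEq α]

lemma mp_unique {D D1 D2 : Matrix α α ℝ} (h1 : IsMP D D1) (h2 : IsMP D D2) : D1 = D2 := by
  obtain ⟨a1, b1, c1, d1⟩ := h1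
  obtain ⟨a2, b2, c2, d2⟩ := h2
  have k1 : D * D1 = D * D2 := by
    calc D * D1 = (D * D1)ᵀ := c1.symm
    _ = D1ᵀ * Dᵀ := transpose_mul _ _
    _ = D1ᵀ * (D * D2 * D)ᵀ := by rw [a2]
    _ = D1ᵀ * (Dᵀ * (D * D2)ᵀ) := by rw [transpose_mul (D * D2) D]
    _ = (D1ᵀ * Dᵀ) * (D * D2)ᵀ := by rw [Matrix.mul_assoc]
    _ = (D * D1)ᵀ * (D * D2) := by rw [← transpose_mul, c2]
    _ = (D * D1) * (D * D2) := by rw [c1]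
    _ = (D * D1 * D) * D2 := by simp only [Matrix.mul_assoc]
    _ = D * D2 := by rw [a1]
  have k2 : D1 * D = D2 * D := by
    calc D1 * D = (D1 * D)ᵀ := d1.symm
    _ = Dᵀ * D1ᵀ := transpose_mul _ _
    _ = (D * (D2 * D))ᵀ * D1ᵀ := by rw [← Matrix.mul_assoc, a2]
    _ = ((D2 * D)ᵀ * Dᵀ) * D1ᵀ := by rw [transpose_mul D (D2 * D)]
    _ = (D2 * D) * (Dᵀ * D1ᵀ) := by rw [d2, Matrix.mul_assoc]
    _ = (D2 * D) * (D1 * D) := by rw [← transpose_mul, d1]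
    _ = D2 * (D * D1 * D) := by simp only [Matrix.mul_assoc]
    _ = D2 * D := by rw [a1]
  calc D1 = D1 * D * D1 := b1.symm
  _ = D1 * (D * D2) := by rw [Matrix.mul_assoc, k1]
  _ = (D1 * D) * D2 := by rw [Matrix.mul_assoc]
  _ = D2 * D * D2 := by rw [k2]
  _ = D2 := b2

lemma mp_symm {D Dp : Matrix α α ℝ} (hD : Dᵀ = D) (h : IsMP D Dp) : Dpᵀ = Dp := by
  obtain ⟨a, b, c, d⟩ := h
  have ht : IsMP D Dpᵀ := by
    refine ⟨?_, ?_, ?_, ?_⟩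
    · calc D * Dpᵀ * D = (Dᵀ * Dp * Dᵀ)ᵀ := by
            simp only [transpose_mul, transpose_transpose, Matrix.mul_assoc]
      _ = D := by rw [hD, a, hD]
    · calc Dpᵀ * D * Dpᵀ = (Dp * Dᵀ * Dp)ᵀ := by
            simp only [transpose_mul, transpose_transpose, Matrix.mul_assoc]
      _ = Dpᵀ := by rw [hD, b]
    · calc (D * Dpᵀ)ᵀ = Dp * Dᵀ := by rw [transpose_mul, transpose_transpose]
      _ = (Dp * D)ᵀ := by rw [hD, d]
      _ = Dᵀ * Dpᵀ := transpose_mul _ _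
      _ = D * Dpᵀ := by rw [hD]
    · calc (Dpᵀ * D)ᵀ = Dᵀ * Dp := by rw [transpose_mul, transpose_transpose]
      _ = (D * Dp)ᵀ := by rw [hD, c]
      _ = Dpᵀ * Dᵀ := transpose_mul _ _
      _ = Dpᵀ * D := by rw [hD]
  exact (mp_unique ⟨a, b, c, d⟩ ht).symm

/-- Range lemma: if `X = Rᵀ R` and `Y = Rᵀ T` then `X * Xp * Y = Y`. -/
lemma mp_range {ρ β : Type*} [Fintype ρ] [Fintype β]
    {X Xp : Matrix α α ℝ} (R : Matrix ρ α ℝ) (T : Matrix ρ β ℝ)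
    (hX : X = Rᵀ * R) (h : IsMP X Xp) (hs : Xpᵀ = Xp) :
    X * Xp * (Rᵀ * T) = Rᵀ * T := by
  obtain ⟨a, b, c, d⟩ := h
  have hEt : (Xp * X)ᵀ = Xp * X := d
  have hXE : X * (Xp * X) = X := by rw [← Matrix.mul_assoc, a]
  have hR : R * (Xp * X) = R := by
    have h0 : (R - R * (Xp * X))ᵀ * (R - R * (Xp * X)) = 0 := by
      calc (R - R * (Xp * X))ᵀ * (R - R * (Xp * X))
          = (Rᵀ * R - Rᵀ * (R * (Xp * X))) - ((Xp * X)ᵀ * (Rᵀ * R) - (Xp * X)ᵀ * (Rᵀ * (R * (Xp * X)))) := by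
            rw [transpose_sub, transpose_mul, Matrix.sub_mul, Matrix.mul_sub, Matrix.mul_sub,
              Matrix.mul_assoc, Matrix.mul_assoc]
      _ = (X - X * (Xp * X)) - ((Xp * X) * X - (Xp * X) * (X * (Xp * X))) := by
            rw [← Matrix.mul_assoc Rᵀ R (Xp * X), ← hX, hEt]
      _ = 0 := by rw [hXE]; simp
    have h0' : (R - R * (Xp * X))ᴴ * (R - R * (Xp * X)) = 0 := by
      rw [conjTranspose_eq_transpose_of_trivial]; exact h0
    have := Matrix.conjTranspose_mul_self_eq_zero.mp h0'
    have := sub_eq_zero.mp this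
    exact this.symm
  have hXXp : X * Xp = (Xp * X) := by
    have hXt : Xᵀ = X := by rw [hX, transpose_mul, transpose_transpose]
    calc X * Xp = Xᵀ * Xpᵀ := by rw [hXt, hs]
    _ = (Xp * X)ᵀ := (transpose_mul _ _).symm
    _ = (Xp * X) := d
  calc X * Xp * (Rᵀ * T) = (Xp * X) * (Rᵀ * T) := by rw [← hXXp]
  _ = ((Xp * X) * Rᵀ) * T := by simp only [Matrix.mul_assoc]
  _ = ((R * (Xp * X))ᵀ) * T := by rw [transpose_mul, hEt]
  _ = Rᵀ * T := by rw [hR]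

/-- stacking: `(fromRows A B)ᵀ * fromRows A' B' = Aᵀ * A' + Bᵀ * B'`. -/
lemma stack_mul {ρ₁ ρ₂ β γ : Type*} [Fintype ρ₁] [Fintype ρ₂] [Fintype β] [Fintype γ]
    (A : Matrix ρ₁ β ℝ) (B : Matrix ρ₂ β ℝ) (A' : Matrix ρ₁ γ ℝ) (B' : Matrix ρ₂ γ ℝ) :
    (fromRows A B)ᵀ * fromRows A' B' = Aᵀ * A' + Bᵀ * B' := by
  rw [transpose_fromRows, fromCols_mul_fromRows]

end helpers

section keyalg
variable {κ μ ν : Type*} [Fintype κ] [Fintype μ] [Fintype ν] [DecidableEq κ] [DecidableEq μ]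

lemma key_alg (T : Matrix κ ν ℝ) (S : Matrix μ ν ℝ) (W : Matrix κ μ ℝ)
    (C Cp Cp' : Matrix κ κ ℝ) (G Gp Gtp : Matrix μ μ ℝ)
    (hCt : Cᵀ = C) (hGt : Gᵀ = G) (hCpt : Cpᵀ = Cp) (hGpt : Gpᵀ = Gp)
    (hCp't : Cp'ᵀ = Cp') (hGtpt : Gtpᵀ = Gtp)
    (F1 : C * (Cp * T) = T) (F2 : C * (Cp * W) = W)
    (F3 : G * (Gp * S) = S) (F4 : G * (Gp * Wᵀ) = Wᵀ)
    (F5 : (G - Wᵀ * (Cp * W)) * (Gtp * (S - Wᵀ * (Cp * T))) = S - Wᵀ * (Cp * T))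
    (F6 : (C - W * (Gp * Wᵀ)) * (Cp' * (T - W * (Gp * S))) = T - W * (Gp * S)) :
    Sᵀ * (Gp * S) + (T - W * (Gp * S))ᵀ * (Cp' * (T - W * (Gp * S)))
      = Tᵀ * (Cp * T) + (S - Wᵀ * (Cp * T))ᵀ * (Gtp * (S - Wᵀ * (Cp * T))) := by
  set Vt := T - W * (Gp * S) with hVt
  set Ht := S - Wᵀ * (Cp * T) with hHt
  set X1 := Cp' * Vt with hX1
  set X2 := Gp * S - Gp * (Wᵀ * X1) with hX2
  set Y2 := Gtp * Ht with hY2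
  set Y1 := Cp * T - Cp * (W * Y2) with hY1
  have e1 : C * X1 + W * X2 = T := by
    calc C * X1 + W * X2 = (C - W * (Gp * Wᵀ)) * X1 + W * (Gp * S) := by
          rw [hX2]
          simp only [Matrix.mul_sub, Matrix.sub_mul, Matrix.mul_assoc]
          abel
    _ = Vt + W * (Gp * S) := by rw [F6]
    _ = T := by rw [hVt]; abel
  have e2 : Wᵀ * X1 + G * X2 = S := by
    have h4 : G * (Gp * (Wᵀ * X1)) = Wᵀ * X1 := by
      rw [← Matrix.mul_assoc Gp Wᵀ X1, ← Matrix.mul_assoc G (Gp * Wᵀ) X1, F4]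
    calc Wᵀ * X1 + G * X2 = Wᵀ * X1 + (G * (Gp * S) - G * (Gp * (Wᵀ * X1))) := by
          rw [hX2, Matrix.mul_sub]
    _ = S := by rw [F3, h4]; abel
  have e3 : C * Y1 + W * Y2 = T := by
    have h2 : C * (Cp * (W * Y2)) = W * Y2 := by
      rw [← Matrix.mul_assoc Cp W Y2, ← Matrix.mul_assoc C (Cp * W) Y2, F2]
    calc C * Y1 + W * Y2 = (C * (Cp * T) - C * (Cp * (W * Y2))) + W * Y2 := by
          rw [hY1, Matrix.mul_sub]
    _ = T := by rw [F1, h2]; abel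
  have e4 : Wᵀ * Y1 + G * Y2 = S := by
    calc Wᵀ * Y1 + G * Y2 = Wᵀ * (Cp * T) + (G - Wᵀ * (Cp * W)) * Y2 := by
          rw [hY1]
          simp only [Matrix.mul_sub, Matrix.sub_mul, Matrix.mul_assoc]
          abel
    _ = Wᵀ * (Cp * T) + Ht := by rw [F5]
    _ = S := by rw [hHt]; abel
  have e7 : Tᵀ * X1 + Sᵀ * X2 = Y1ᵀ * T + Y2ᵀ * S := by
    calc Tᵀ * X1 + Sᵀ * X2
        = (C * Y1 + W * Y2)ᵀ * X1 + (Wᵀ * Y1 + G * Y2)ᵀ * X2 := by rw [e3, e4]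
    _ = Y1ᵀ * (C * X1 + W * X2) + Y2ᵀ * (Wᵀ * X1 + G * X2) := by
        simp only [transpose_add, transpose_mul, transpose_transpose, hCt, hGt,
          Matrix.add_mul, Matrix.mul_add, Matrix.mul_assoc]
        abel
    _ = Y1ᵀ * T + Y2ᵀ * S := by rw [e1, e2]
  have e5 : Tᵀ * Y1 + Sᵀ * Y2 = Tᵀ * (Cp * T) + Htᵀ * Y2 := by
    rw [hY1, hHt]
    simp only [Matrix.mul_sub, Matrix.sub_mul, transpose_sub, transpose_mul,
      transpose_transpose, hCpt, Matrix.mul_assoc]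
    abel
  have e6 : Tᵀ * X1 + Sᵀ * X2 = Sᵀ * (Gp * S) + Vtᵀ * X1 := by
    rw [hX2, hVt]
    simp only [Matrix.mul_sub, Matrix.sub_mul, transpose_sub, transpose_mul,
      transpose_transpose, hGpt, Matrix.mul_assoc]
    abel
  calc Sᵀ * (Gp * S) + Vtᵀ * X1 = Tᵀ * X1 + Sᵀ * X2 := e6.symm
  _ = Y1ᵀ * T + Y2ᵀ * S := e7
  _ = (Tᵀ * Y1 + Sᵀ * Y2)ᵀ := by
      simp only [transpose_add, transpose_mul, transpose_transpose]
  _ = (Tᵀ * (Cp * T) + Htᵀ * Y2)ᵀ := by rw [e5]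
  _ = Tᵀ * (Cp * T) + Htᵀ * Y2 := by
      rw [hY2]
      simp only [transpose_add, transpose_mul, transpose_transpose, hCpt, hGtpt,
        Matrix.mul_assoc]
end keyalg

open scoped MatrixOrder in
lemma psd_fact {ι : Type*} [Fintype ι] [DecidableEq ι] {M : Matrix ι ι ℝ} (h : M.PosSemidef) :
    ∃ B : Matrix ι ι ℝ, M = Bᴴ * B := by
  obtain ⟨B, hB⟩ := CStarAlgebra.nonneg_iff_eq_star_mul_self.mp h.nonneg
  exact ⟨B, by rw [hB, star_eq_conjTranspose]⟩


set_option maxHeartbeats 4000000 in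
theorem riccati_downdate_propagation {n m k : ℕ}
    (A : Matrix (Fin n) (Fin n) ℝ) (B : Matrix (Fin n) (Fin m) ℝ)
    (P : Matrix (Fin n) (Fin n) ℝ)
    (Qx : Matrix (Fin n) (Fin n) ℝ) (Qxw : Matrix (Fin n) (Fin m) ℝ)
    (Qw : Matrix (Fin m) (Fin m) ℝ)
    (V : Matrix (Fin n) (Fin k) ℝ) (C Cp : Matrix (Fin k) (Fin k) ℝ)
    (Gp Gtp : Matrix (Fin m) (Fin m) ℝ) (Cp' : Matrix (Fin k) (Fin k) ℝ)
    (hQ : (Matrix.fromBlocks Qx Qxw Qxwᵀ Qw).PosSemidef)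
    (hP : P.PosSemidef) (hC : C.PosSemidef)
    (hV : ∃ Y : Matrix (Fin k) (Fin n) ℝ, Vᵀ = C * Y)
    (hPt : (P - V * Cp * Vᵀ).PosSemidef)
    (hCp : IsMP C Cp)
    (hGp : IsMP (Qw + Bᵀ * P * B) Gp)
    (hGtp : IsMP ((Qw + Bᵀ * P * B) - Bᵀ * V * Cp * Vᵀ * B) Gtp)
    (hCp' : IsMP (C - Vᵀ * B * Gp * Bᵀ * V) Cp') :
    ((Qx + Aᵀ * P * A) - Aᵀ * V * Cp * Vᵀ * A) -
      ((Qxw + Aᵀ * P * B) - Aᵀ * V * Cp * Vᵀ * B) * Gtp *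
        ((Qxw + Aᵀ * P * B) - Aᵀ * V * Cp * Vᵀ * B)ᵀ =
    ((Qx + Aᵀ * P * A) - (Qxw + Aᵀ * P * B) * Gp * (Qxw + Aᵀ * P * B)ᵀ) -
      ((Aᵀ - (Qxw + Aᵀ * P * B) * Gp * Bᵀ) * V) * Cp' *
        ((Aᵀ - (Qxw + Aᵀ * P * B) * Gp * Bᵀ) * V)ᵀ := by
  classical
  obtain ⟨R0, hR0⟩ := psd_fact hQ
  rw [conjTranspose_eq_transpose_of_trivial] at hR0
  obtain ⟨Sp, hSp⟩ := psd_fact hP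
  rw [conjTranspose_eq_transpose_of_trivial] at hSp
  obtain ⟨St, hSt⟩ := psd_fact hPt
  rw [conjTranspose_eq_transpose_of_trivial] at hSt
  obtain ⟨Z, hZ⟩ := psd_fact hC
  rw [conjTranspose_eq_transpose_of_trivial] at hZ
  set Rx := R0.submatrix id Sum.inl with hRx
  set Rw := R0.submatrix id Sum.inr with hRw
  have hQw : Qw = Rwᵀ * Rw := by
    ext i j
    have := congrFun (congrFun hR0 (Sum.inr i)) (Sum.inr j)
    simpa [Matrix.mul_apply, Matrix.fromBlocks, hRw, hRx] using this
  have hQwx : Qxwᵀ = Rwᵀ * Rx := by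
    ext i j
    have := congrFun (congrFun hR0 (Sum.inr i)) (Sum.inl j)
    simpa [Matrix.mul_apply, Matrix.fromBlocks, hRw, hRx] using this
  -- symmetries
  have hPsym : Pᵀ = P := by rw [hSp]; simp [transpose_mul]
  have hCt : Cᵀ = C := by rw [hZ]; simp [transpose_mul]
  have hQwsym : Qwᵀ = Qw := by rw [hQw]; simp [transpose_mul]
  have hGsym : (Qw + Bᵀ * P * B)ᵀ = Qw + Bᵀ * P * B := by
    simp only [transpose_add, transpose_mul, transpose_transpose, hPsym, hQwsym,
      Matrix.mul_assoc]
  have hCpt : Cpᵀ = Cp := mp_symm hCt hCp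
  have hGpt : Gpᵀ = Gp := mp_symm hGsym hGp
  have hGtsym : ((Qw + Bᵀ * P * B) - Bᵀ * V * Cp * Vᵀ * B)ᵀ
      = (Qw + Bᵀ * P * B) - Bᵀ * V * Cp * Vᵀ * B := by
    simp only [transpose_sub, transpose_add, transpose_mul, transpose_transpose, hPsym,
      hQwsym, hCpt, Matrix.mul_assoc]
  have hGtpt : Gtpᵀ = Gtp := mp_symm hGtsym hGtp
  have hC'sym : (C - Vᵀ * B * Gp * Bᵀ * V)ᵀ = C - Vᵀ * B * Gp * Bᵀ * V := by
    simp only [transpose_sub, transpose_mul, transpose_transpose, hGpt, hCt,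
      Matrix.mul_assoc]
  have hCp't : Cp'ᵀ = Cp' := mp_symm hC'sym hCp'
  -- F1, F2
  obtain ⟨Y0, hY0⟩ := hV
  have hCCpV : C * (Cp * Vᵀ) = Vᵀ := by
    rw [hY0]
    calc C * (Cp * (C * Y0)) = (C * Cp * C) * Y0 := by simp only [Matrix.mul_assoc]
    _ = C * Y0 := by rw [hCp.1]
  have F1 : C * (Cp * (Vᵀ * A)) = Vᵀ * A := by
    calc C * (Cp * (Vᵀ * A)) = (C * (Cp * Vᵀ)) * A := by simp only [Matrix.mul_assoc]
    _ = Vᵀ * A := by rw [hCCpV]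
  have F2 : C * (Cp * (Vᵀ * B)) = Vᵀ * B := by
    calc C * (Cp * (Vᵀ * B)) = (C * (Cp * Vᵀ)) * B := by simp only [Matrix.mul_assoc]
    _ = Vᵀ * B := by rw [hCCpV]
  -- F3 : G * (Gp * S) = S  with S = (Qxw + Aᵀ*P*B)ᵀ
  have hGfact : Qw + Bᵀ * P * B = (fromRows Rw (Sp * B))ᵀ * fromRows Rw (Sp * B) := by
    rw [stack_mul, ← hQw, hSp]
    simp only [transpose_mul, Matrix.mul_assoc]
  have hHfact : (Qxw + Aᵀ * P * B)ᵀ = (fromRows Rw (Sp * B))ᵀ * fromRows Rx (Sp * A) := by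
    rw [stack_mul, ← hQwx]
    simp only [transpose_add, transpose_mul, transpose_transpose, hPsym, Matrix.mul_assoc]
    rw [hSp]
    simp only [transpose_mul, Matrix.mul_assoc]
  have F3 : (Qw + Bᵀ * P * B) * (Gp * (Qxw + Aᵀ * P * B)ᵀ) = (Qxw + Aᵀ * P * B)ᵀ := by
    have h := mp_range (fromRows Rw (Sp * B)) (fromRows Rx (Sp * A)) hGfact hGp hGpt
    rw [← hHfact, Matrix.mul_assoc] at h
    exact h
  -- F4 : G * (Gp * Bᵀ V) = Bᵀ V
  have hStB : ∀ M : Matrix (Fin n) (Fin n) ℝ, ∀ N : Matrix (Fin n) (Fin m) ℝ,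
      (St * N)ᵀ * (St * M) = Nᵀ * ((P - V * Cp * Vᵀ) * M) := by
    intro M N
    rw [transpose_mul, Matrix.mul_assoc, ← Matrix.mul_assoc Stᵀ St M, ← hSt]
  have hStB' : ∀ M : Matrix (Fin n) (Fin m) ℝ, ∀ N : Matrix (Fin n) (Fin m) ℝ,
      (St * N)ᵀ * (St * M) = Nᵀ * ((P - V * Cp * Vᵀ) * M) := by
    intro M N
    rw [transpose_mul, Matrix.mul_assoc, ← Matrix.mul_assoc Stᵀ St M, ← hSt]
  have hGtfact : (Qw + Bᵀ * P * B) - Bᵀ * V * Cp * Vᵀ * B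
      = (fromRows Rw (St * B))ᵀ * fromRows Rw (St * B) := by
    rw [stack_mul, ← hQw, hStB']
    simp only [Matrix.mul_sub, Matrix.sub_mul, Matrix.mul_assoc]
    abel
  have hZZ : ∀ (M : Matrix (Fin n) (Fin k) ℝ), Zᵀ * (Z * (Cp * (Mᵀ * B))) = Mᵀ * B → True := fun _ _ => trivial
  have hZCpB : Zᵀ * (Z * (Cp * (Vᵀ * B))) = Vᵀ * B := by
    calc Zᵀ * (Z * (Cp * (Vᵀ * B))) = C * (Cp * (Vᵀ * B)) := by
          rw [hZ]; simp only [Matrix.mul_assoc]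
    _ = Vᵀ * B := F2
  have hsec : (Z * (Cp * (Vᵀ * B)))ᵀ * (Z * (Cp * (Vᵀ * B))) = Bᵀ * (V * (Cp * (Vᵀ * B))) := by
    calc (Z * (Cp * (Vᵀ * B)))ᵀ * (Z * (Cp * (Vᵀ * B)))
        = (Cp * (Vᵀ * B))ᵀ * (Zᵀ * (Z * (Cp * (Vᵀ * B)))) := by
          simp only [transpose_mul, Matrix.mul_assoc]
    _ = (Cp * (Vᵀ * B))ᵀ * (Vᵀ * B) := by rw [hZCpB]
    _ = Bᵀ * (V * (Cp * (Vᵀ * B))) := by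
          simp only [transpose_mul, transpose_transpose, hCpt, Matrix.mul_assoc]
  have hGfact2 : Qw + Bᵀ * P * B
      = (fromRows (fromRows Rw (St * B)) (Z * (Cp * (Vᵀ * B))))ᵀ
        * fromRows (fromRows Rw (St * B)) (Z * (Cp * (Vᵀ * B))) := by
    rw [stack_mul, ← hGtfact, hsec]
    simp only [Matrix.mul_sub, Matrix.sub_mul, Matrix.mul_assoc]
    abel
  have F2t : (Z * (Cp * (Vᵀ * B)))ᵀ * Z = Bᵀ * V := by
    have h := congrArg Matrix.transpose F2
    simp only [transpose_mul, transpose_transpose, hCpt, hCt, Matrix.mul_assoc] at h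
    -- h : Bᵀ * (V * (Cp * C)) = Bᵀ * V
    calc (Z * (Cp * (Vᵀ * B)))ᵀ * Z = Bᵀ * (V * (Cp * (Zᵀ * Z))) := by
          simp only [transpose_mul, transpose_transpose, hCpt, Matrix.mul_assoc]
    _ = Bᵀ * (V * (Cp * C)) := by rw [← hZ]
    _ = Bᵀ * V := h
  have hBVfact : Bᵀ * V
      = (fromRows (fromRows Rw (St * B)) (Z * (Cp * (Vᵀ * B))))ᵀ
        * fromRows (0 : Matrix ((Fin n ⊕ Fin m) ⊕ Fin n) (Fin k) ℝ) Z := by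
    rw [stack_mul, Matrix.mul_zero, F2t, zero_add]
  have F4 : (Qw + Bᵀ * P * B) * (Gp * (Bᵀ * V)) = Bᵀ * V := by
    have h := mp_range (fromRows (fromRows Rw (St * B)) (Z * (Cp * (Vᵀ * B))))
      (fromRows (0 : Matrix ((Fin n ⊕ Fin m) ⊕ Fin n) (Fin k) ℝ) Z) hGfact2 hGp hGpt
    rw [← hBVfact, Matrix.mul_assoc] at h
    exact h
  -- F5
  have hHtfact : (Qxw + Aᵀ * P * B)ᵀ - Bᵀ * (V * (Cp * (Vᵀ * A)))
      = (fromRows Rw (St * B))ᵀ * fromRows Rx (St * A) := by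
    rw [stack_mul, ← hQwx, hStB]
    simp only [transpose_add, transpose_mul, transpose_transpose, hPsym,
      Matrix.mul_sub, Matrix.sub_mul, Matrix.mul_assoc]
    abel
  have F5 : ((Qw + Bᵀ * P * B) - Bᵀ * V * Cp * Vᵀ * B)
      * (Gtp * ((Qxw + Aᵀ * P * B)ᵀ - Bᵀ * (V * (Cp * (Vᵀ * A)))))
      = (Qxw + Aᵀ * P * B)ᵀ - Bᵀ * (V * (Cp * (Vᵀ * A))) := by
    have h := mp_range (fromRows Rw (St * B)) (fromRows Rx (St * A)) hGtfact hGtp hGtpt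
    rw [← hHtfact, Matrix.mul_assoc] at h
    exact h
  -- F6
  have hZCpA : Zᵀ * (Z * (Cp * (Vᵀ * A))) = Vᵀ * A := by
    calc Zᵀ * (Z * (Cp * (Vᵀ * A))) = C * (Cp * (Vᵀ * A)) := by
          rw [hZ]; simp only [Matrix.mul_assoc]
    _ = Vᵀ * A := F1
  set K1 : Matrix (Fin k ⊕ ((Fin n ⊕ Fin m) ⊕ Fin n)) (Fin k) ℝ :=
    fromRows Z (0 : Matrix ((Fin n ⊕ Fin m) ⊕ Fin n) (Fin k) ℝ) with hK1
  set K2 : Matrix (Fin k ⊕ ((Fin n ⊕ Fin m) ⊕ Fin n)) (Fin m) ℝ :=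
    fromRows (Z * (Cp * (Vᵀ * B))) (fromRows Rw (St * B)) with hK2
  set Tf0 : Matrix (Fin k ⊕ ((Fin n ⊕ Fin m) ⊕ Fin n)) (Fin n) ℝ :=
    fromRows (Z * (Cp * (Vᵀ * A))) (fromRows Rx (St * A)) with hTf0
  have kk1 : K1ᵀ * K1 = C := by
    rw [hK1, stack_mul, ← hZ, Matrix.transpose_zero, Matrix.zero_mul, add_zero]
  have kk12 : K1ᵀ * K2 = Vᵀ * B := by
    rw [hK1, hK2, stack_mul, Matrix.transpose_zero, Matrix.zero_mul, add_zero, hZCpB]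
  have kk21 : K2ᵀ * K1 = Bᵀ * V := by
    rw [hK1, hK2, stack_mul, Matrix.mul_zero, add_zero, F2t]
  have kk2 : K2ᵀ * K2 = Qw + Bᵀ * P * B := by
    rw [hK2, stack_mul, hsec, ← hGtfact]
    simp only [Matrix.mul_sub, Matrix.sub_mul, Matrix.mul_assoc]
    abel
  have kk1T : K1ᵀ * Tf0 = Vᵀ * A := by
    rw [hK1, hTf0, stack_mul, Matrix.transpose_zero, Matrix.zero_mul, add_zero, hZCpA]
  have kk2T : K2ᵀ * Tf0 = (Qxw + Aᵀ * P * B)ᵀ := by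
    rw [hK2, hTf0, stack_mul, ← hHtfact]
    have h1 : (Z * (Cp * (Vᵀ * B)))ᵀ * (Z * (Cp * (Vᵀ * A))) = Bᵀ * (V * (Cp * (Vᵀ * A))) := by
      calc (Z * (Cp * (Vᵀ * B)))ᵀ * (Z * (Cp * (Vᵀ * A)))
          = (Cp * (Vᵀ * B))ᵀ * (Zᵀ * (Z * (Cp * (Vᵀ * A)))) := by
            simp only [transpose_mul, Matrix.mul_assoc]
      _ = (Cp * (Vᵀ * B))ᵀ * (Vᵀ * A) := by rw [hZCpA]
      _ = Bᵀ * (V * (Cp * (Vᵀ * A))) := by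
            simp only [transpose_mul, transpose_transpose, hCpt, Matrix.mul_assoc]
    rw [h1]
    abel
  set Sf := K1 - K2 * (Gp * (Bᵀ * V)) with hSf
  have hK1KE : K1ᵀ * (K2 * (Gp * (Bᵀ * V))) = Vᵀ * B * (Gp * (Bᵀ * V)) := by
    rw [← Matrix.mul_assoc, kk12]
  have hK2KE : K2ᵀ * (K2 * (Gp * (Bᵀ * V))) = Bᵀ * V := by
    rw [← Matrix.mul_assoc, kk2, F4]
  have hEt : (Gp * (Bᵀ * V))ᵀ = Vᵀ * B * Gp := by
    rw [transpose_mul, transpose_mul, transpose_transpose, hGpt]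
  have hC'fact : C - Vᵀ * B * Gp * Bᵀ * V = Sfᵀ * Sf := by
    have expand : Sfᵀ * Sf
        = K1ᵀ * K1 - K1ᵀ * (K2 * (Gp * (Bᵀ * V)))
          - ((Gp * (Bᵀ * V))ᵀ * (K2ᵀ * K1)
            - (Gp * (Bᵀ * V))ᵀ * (K2ᵀ * (K2 * (Gp * (Bᵀ * V))))) := by
      rw [hSf]
      simp only [transpose_sub, transpose_mul, Matrix.sub_mul, Matrix.mul_sub,
        Matrix.mul_assoc]
      abel
    rw [expand, kk1, kk21, hK1KE, hK2KE, hEt, sub_self, sub_zero]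
    simp only [Matrix.mul_assoc]
  have hVtfact : Vᵀ * A - Vᵀ * B * (Gp * (Qxw + Aᵀ * P * B)ᵀ) = Sfᵀ * Tf0 := by
    have expand : Sfᵀ * Tf0
        = K1ᵀ * Tf0 - (Gp * (Bᵀ * V))ᵀ * (K2ᵀ * Tf0) := by
      rw [hSf]
      simp only [transpose_sub, transpose_mul, Matrix.sub_mul, Matrix.mul_assoc]
    rw [expand, kk1T, kk2T, hEt]
    simp only [Matrix.mul_assoc]
  have F6 : (C - Vᵀ * B * Gp * Bᵀ * V)
      * (Cp' * (Vᵀ * A - Vᵀ * B * (Gp * (Qxw + Aᵀ * P * B)ᵀ)))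
      = Vᵀ * A - Vᵀ * B * (Gp * (Qxw + Aᵀ * P * B)ᵀ) := by
    have h := mp_range Sf Tf0 hC'fact hCp' hCp't
    rw [← hVtfact, Matrix.mul_assoc] at h
    exact h
  -- assemble
  have key := key_alg (Vᵀ * A) ((Qxw + Aᵀ * P * B)ᵀ) (Vᵀ * B) C Cp Cp'
      (Qw + Bᵀ * P * B) Gp Gtp hCt hGsym hCpt hGpt hCp't hGtpt F1 F2 F3
      (by rw [transpose_mul, transpose_transpose]; exact F4)
      (by
        simp only [transpose_mul, transpose_transpose, Matrix.mul_assoc]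
        simpa only [Matrix.mul_assoc] using F5)
      (by
        simp only [transpose_mul, transpose_transpose, Matrix.mul_assoc]
        simpa only [Matrix.mul_assoc] using F6)
  rw [sub_sub, sub_sub]
  congr 1
  have k2 := key.symm
  simp only [transpose_sub, transpose_add, transpose_mul, transpose_transpose, hPsym,
    hCpt, hGpt, hGtpt, hCt, hQwsym, Matrix.mul_add, Matrix.add_mul, Matrix.mul_sub,
    Matrix.sub_mul, Matrix.mul_assoc] at k2 ⊢
  abel_nf at k2 ⊢
  exact k2
end

section
/- Block generalized Schur complement identity: for a PSD matrix M = [[A,B,C],[Bᵀ,D,E],[Cᵀ,Eᵀ,F]], taking the Schur complement with respect to the full lower-right 2×2 block [[D,E],[Eᵀ,F]] gives the same result as first taking the Schur complement with respect to D and then with respect to F - EᵀD†E: M /† [[D,E],[Eᵀ,F]] = A - BD†Bᵀ - (C - BD†E)(F - EᵀD†E)†(C - BD†E)ᵀ. -/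
open Matrix

private lemma psd_cancel {ι κ : Type*} [Fintype ι] [DecidableEq ι]
    {M : Matrix ι ι ℝ} (hM : M.PosSemidef) (X : Matrix ι κ ℝ)
    (h : Xᵀ * M * X = 0) : M * X = 0 := by
  obtain ⟨K, rfl⟩ : ∃ K : Matrix ι ι ℝ, M = Kᴴ * K := by
    open scoped MatrixOrder in
    exact CStarAlgebra.nonneg_iff_eq_star_mul_self.mp hM.nonneg
  have h2 : (K * X)ᴴ * (K * X) = 0 := by
    calc (K * X)ᴴ * (K * X) = Xᴴ * Kᴴ * (K * X) := by rw [conjTranspose_mul]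
    _ = Xᵀ * (Kᴴ * K) * X := by
        rw [conjTranspose_eq_transpose_of_trivial]
        simp only [Matrix.mul_assoc]
    _ = 0 := h
  rw [conjTranspose_mul_self_eq_zero] at h2
  rw [Matrix.mul_assoc, h2, Matrix.mul_zero]

private lemma isMP_unique {α : Type*} [Fintype α] [DecidableEq α] {A X Y : Matrix α α ℝ}
    (hX : IsMP A X) (hY : IsMP A Y) : X = Y := by
  obtain ⟨hX1, hX2, hX3, hX4⟩ := hX
  obtain ⟨hY1, hY2, hY3, hY4⟩ := hY
  have e1 : (A * X) * (A * Y) = A * Y := by rw [← Matrix.mul_assoc, hX1]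
  have e2 : (A * Y) * (A * X) = A * X := by rw [← Matrix.mul_assoc, hY1]
  have hAX : A * X = A * Y := by
    calc A * X = (A * Y) * (A * X) := e2.symm
    _ = (A * Y)ᵀ * (A * X)ᵀ := by rw [hY3, hX3]
    _ = ((A * X) * (A * Y))ᵀ := (transpose_mul _ _).symm
    _ = (A * Y)ᵀ := by rw [e1]
    _ = A * Y := hY3
  have f1 : (X * A) * (Y * A) = X * A := by
    rw [Matrix.mul_assoc X A (Y * A), ← Matrix.mul_assoc A Y A, hY1]
  have f2 : (Y * A) * (X * A) = Y * A := by
    rw [Matrix.mul_assoc Y A (X * A), ← Matrix.mul_assoc A X A, hX1]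
  have hXA : X * A = Y * A := by
    calc X * A = (X * A) * (Y * A) := f1.symm
    _ = (X * A)ᵀ * (Y * A)ᵀ := by rw [hX4, hY4]
    _ = ((Y * A) * (X * A))ᵀ := (transpose_mul _ _).symm
    _ = (Y * A)ᵀ := by rw [f2]
    _ = Y * A := hY4
  calc X = X * A * X := hX2.symm
  _ = Y * A * Y := by rw [hXA, Matrix.mul_assoc Y A X, hAX, ← Matrix.mul_assoc]
  _ = Y := hY2

private lemma fromRows_zero_right {m₁ m₂ n' : Type*} {X : Matrix m₁ n' ℝ} {Y : Matrix m₂ n' ℝ}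
    (h : Matrix.fromRows X Y = 0) : Y = 0 := by
  ext i j
  have := congrFun (congrFun h (Sum.inr i)) j
  simpa [fromRows_apply_inr, fromRows_apply_inl] using this

private lemma fromRows_zero_left {m₁ m₂ n' : Type*} {X : Matrix m₁ n' ℝ} {Y : Matrix m₂ n' ℝ}
    (h : Matrix.fromRows X Y = 0) : X = 0 := by
  ext i j
  have := congrFun (congrFun h (Sum.inl i)) j
  simpa [fromRows_apply_inr, fromRows_apply_inl] using this

theorem block_gsc_identity {n m p : ℕ}
    (A : Matrix (Fin n) (Fin n) ℝ) (B : Matrix (Fin n) (Fin m) ℝ)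
    (C : Matrix (Fin n) (Fin p) ℝ) (D : Matrix (Fin m) (Fin m) ℝ)
    (E : Matrix (Fin m) (Fin p) ℝ) (F : Matrix (Fin p) (Fin p) ℝ)
    (Dp : Matrix (Fin m) (Fin m) ℝ) (Sp : Matrix (Fin p) (Fin p) ℝ)
    (Mbarp : Matrix (Fin m ⊕ Fin p) (Fin m ⊕ Fin p) ℝ)
    (hM : (Matrix.fromBlocks A (Matrix.fromCols B C) (Matrix.fromRows Bᵀ Cᵀ)
            (Matrix.fromBlocks D E Eᵀ F)).PosSemidef)
    (hDp : IsMP D Dp)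
    (hSp : IsMP (F - Eᵀ * Dp * E) Sp)
    (hMbarp : IsMP (Matrix.fromBlocks D E Eᵀ F) Mbarp) :
    A - (Matrix.fromCols B C) * Mbarp * (Matrix.fromCols B C)ᵀ =
      A - B * Dp * Bᵀ - (C - B * Dp * E) * Sp * (C - B * Dp * E)ᵀ := by
  rw [← transpose_fromCols] at hM
  set U := Matrix.fromCols B C with hUdef
  set N := Matrix.fromBlocks D E Eᵀ F with hNdef
  set S := F - Eᵀ * Dp * E with hSdef
  have hFS : F = S + Eᵀ * Dp * E := by rw [hSdef]; abel
  -- PSD facts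
  have hNpsd : N.PosSemidef := by
    have h := hM.submatrix Sum.inr
    have he : (Matrix.fromBlocks A U Uᵀ N).submatrix Sum.inr Sum.inr = N := by
      ext i j; simp
    rwa [he] at h
  have hDpsd : D.PosSemidef := by
    have h := hNpsd.submatrix Sum.inl
    have he : N.submatrix Sum.inl Sum.inl = D := by
      rw [hNdef]; ext i j; simp
    rwa [he] at h
  have hDsym : Dᵀ = D := by
    rw [← conjTranspose_eq_transpose_of_trivial]; exact hDpsd.1
  have hNsym : Nᵀ = N := by
    rw [← conjTranspose_eq_transpose_of_trivial]; exact hNpsd.1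
  obtain ⟨hD1, hD2, hD3, hD4⟩ := hDp
  obtain ⟨hS1, hS2, hS3, hS4⟩ := hSp
  obtain ⟨hN1, hN2, hN3, hN4⟩ := hMbarp
  -- transpose of Dp
  have hDpt : Dpᵀ = Dp := by
    refine isMP_unique ⟨?_, ?_, ?_, ?_⟩ ⟨hD1, hD2, hD3, hD4⟩
    · calc D * Dpᵀ * D = (D * (Dp * D))ᵀ := by
            rw [transpose_mul, transpose_mul, hDsym]
      _ = (D * Dp * D)ᵀ := by rw [Matrix.mul_assoc]
      _ = D := by rw [hD1, hDsym]
    · calc Dpᵀ * D * Dpᵀ = (Dp * (D * Dp))ᵀ := by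
            rw [transpose_mul, transpose_mul, hDsym]
      _ = (Dp * D * Dp)ᵀ := by rw [Matrix.mul_assoc]
      _ = Dpᵀ := by rw [hD2]
    · calc (D * Dpᵀ)ᵀ = Dp * D := by rw [transpose_mul, transpose_transpose, hDsym]
      _ = (Dp * D)ᵀ := hD4.symm
      _ = Dᵀ * Dpᵀ := transpose_mul _ _
      _ = D * Dpᵀ := by rw [hDsym]
    · calc (Dpᵀ * D)ᵀ = D * Dp := by rw [transpose_mul, transpose_transpose, hDsym]
      _ = (D * Dp)ᵀ := hD3.symm
      _ = Dpᵀ * Dᵀ := transpose_mul _ _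
      _ = Dpᵀ * D := by rw [hDsym]
  -- range condition: E = D * Dp * E
  have hDE : D * Dp * E = E := by
    have hDP : D * (1 - Dp * D) = 0 := by
      rw [Matrix.mul_sub, Matrix.mul_one, ← Matrix.mul_assoc, hD1, sub_self]
    have hz : (Matrix.fromRows (1 - Dp * D) (0 : Matrix (Fin p) (Fin m) ℝ))ᵀ * N *
        (Matrix.fromRows (1 - Dp * D) (0 : Matrix (Fin p) (Fin m) ℝ)) = 0 := by
      rw [Matrix.mul_assoc, hNdef, fromBlocks_mul_fromRows, hDP, transpose_fromRows,
        transpose_zero, fromCols_mul_fromRows]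
      simp
    have hc := psd_cancel hNpsd _ hz
    rw [hNdef, fromBlocks_mul_fromRows, hDP] at hc
    have hE0 : Eᵀ * (1 - Dp * D) + F * (0 : Matrix (Fin p) (Fin m) ℝ) = 0 := fromRows_zero_right hc
    rw [Matrix.mul_zero, add_zero, Matrix.mul_sub, Matrix.mul_one, sub_eq_zero] at hE0
    calc D * Dp * E = (Eᵀ * (Dp * D))ᵀ := by
          rw [transpose_mul, transpose_mul, transpose_transpose, hDpt, hDsym, Matrix.mul_assoc]
    _ = E := by rw [← hE0, transpose_transpose]
  have hEDD : Eᵀ * Dp * D = Eᵀ := by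
    calc Eᵀ * Dp * D = (D * Dp * E)ᵀ := by
          rw [transpose_mul, transpose_mul, hDpt, hDsym, Matrix.mul_assoc]
    _ = Eᵀ := by rw [hDE]
  -- range conditions from PSD of M
  have hQ : U * (Mbarp * N) = U := by
    have hNQ : N * (1 - Mbarp * N) = 0 := by
      rw [Matrix.mul_sub, Matrix.mul_one, ← Matrix.mul_assoc, hN1, sub_self]
    have hz : (Matrix.fromRows (0 : Matrix (Fin n) (Fin m ⊕ Fin p) ℝ) (1 - Mbarp * N))ᵀ *
        (Matrix.fromBlocks A U Uᵀ N) * (Matrix.fromRows (0 : Matrix (Fin n) (Fin m ⊕ Fin p) ℝ) (1 - Mbarp * N)) = 0 := by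
      rw [Matrix.mul_assoc, fromBlocks_mul_fromRows, hNQ, transpose_fromRows,
        transpose_zero, fromCols_mul_fromRows]
      simp
    have hc := psd_cancel hM _ hz
    rw [fromBlocks_mul_fromRows, hNQ] at hc
    have h0 : A * (0 : Matrix (Fin n) (Fin m ⊕ Fin p) ℝ) + U * (1 - Mbarp * N) = 0 := fromRows_zero_left hc
    rw [Matrix.mul_zero, zero_add, Matrix.mul_sub, Matrix.mul_one, sub_eq_zero] at h0
    exact h0.symm
  have hN1' : N * Mbarpᵀ * N = N := by
    have h := congrArg Matrix.transpose hN1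
    rw [transpose_mul, transpose_mul, hNsym, ← Matrix.mul_assoc] at h
    exact h
  have hQ2 : U * (Mbarpᵀ * N) = U := by
    have hNQ : N * (1 - Mbarpᵀ * N) = 0 := by
      rw [Matrix.mul_sub, Matrix.mul_one, ← Matrix.mul_assoc, hN1', sub_self]
    have hz : (Matrix.fromRows (0 : Matrix (Fin n) (Fin m ⊕ Fin p) ℝ) (1 - Mbarpᵀ * N))ᵀ *
        (Matrix.fromBlocks A U Uᵀ N) * (Matrix.fromRows (0 : Matrix (Fin n) (Fin m ⊕ Fin p) ℝ) (1 - Mbarpᵀ * N)) = 0 := by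
      rw [Matrix.mul_assoc, fromBlocks_mul_fromRows, hNQ, transpose_fromRows,
        transpose_zero, fromCols_mul_fromRows]
      simp
    have hc := psd_cancel hM _ hz
    rw [fromBlocks_mul_fromRows, hNQ] at hc
    have h0 : A * (0 : Matrix (Fin n) (Fin m ⊕ Fin p) ℝ) + U * (1 - Mbarpᵀ * N) = 0 := fromRows_zero_left hc
    rw [Matrix.mul_zero, zero_add, Matrix.mul_sub, Matrix.mul_one, sub_eq_zero] at h0
    exact h0.symm
  have hUt_range : N * (Mbarp * Uᵀ) = Uᵀ := by
    have h := congrArg Matrix.transpose hQ2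
    rw [transpose_mul, transpose_mul, transpose_transpose, hNsym, Matrix.mul_assoc] at h
    exact h
  -- the explicit blockwise pseudoinverse-like matrix
  set W := Matrix.fromBlocks (Dp + Dp * E * Sp * Eᵀ * Dp) (-(Dp * E * Sp)) (-(Sp * Eᵀ * Dp)) Sp
    with hWdef
  have hNW : N * W = Matrix.fromBlocks (D * Dp) 0 (Eᵀ * Dp - S * Sp * Eᵀ * Dp) (S * Sp) := by
    rw [hNdef, hWdef, fromBlocks_multiply]
    refine fromBlocks_inj.mpr ⟨?_, ?_, ?_, ?_⟩
    · simp only [Matrix.mul_add, Matrix.mul_neg, ← Matrix.mul_assoc]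
      rw [hDE]; abel
    · simp only [Matrix.mul_neg, ← Matrix.mul_assoc]
      rw [hDE]; abel
    · rw [hFS]
      simp only [Matrix.mul_add, Matrix.add_mul, Matrix.mul_neg, ← Matrix.mul_assoc]
      abel
    · rw [hFS]
      simp only [Matrix.add_mul, Matrix.mul_neg, ← Matrix.mul_assoc]
      abel
  have hNWN : N * W * N = N := by
    rw [hNW, hNdef, fromBlocks_multiply]
    refine fromBlocks_inj.mpr ⟨?_, ?_, ?_, ?_⟩
    · rw [Matrix.zero_mul, add_zero]; exact hD1
    · rw [Matrix.zero_mul, add_zero]; exact hDE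
    · have h3' : S * Sp * Eᵀ * Dp * D = S * Sp * Eᵀ := by
        calc S * Sp * Eᵀ * Dp * D = S * Sp * (Eᵀ * Dp * D) := by simp only [Matrix.mul_assoc]
        _ = S * Sp * Eᵀ := by rw [hEDD]
      rw [Matrix.sub_mul, hEDD, h3']; abel
    · rw [hFS, Matrix.sub_mul, Matrix.mul_add, hS1]
      simp only [← Matrix.mul_assoc]
      abel
  have hkey : U * W * Uᵀ = U * Mbarp * Uᵀ := by
    calc U * W * Uᵀ = (U * (Mbarp * N)) * W * (N * (Mbarp * Uᵀ)) := by rw [hQ, hUt_range]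
    _ = U * (Mbarp * (N * W * N) * Mbarp) * Uᵀ := by simp only [Matrix.mul_assoc]
    _ = U * (Mbarp * N * Mbarp) * Uᵀ := by rw [hNWN]
    _ = U * Mbarp * Uᵀ := by rw [hN2]
  rw [← hkey]
  have hUW : U * W * Uᵀ = (B * (Dp + Dp * E * Sp * Eᵀ * Dp) + C * (-(Sp * Eᵀ * Dp))) * Bᵀ +
      (B * (-(Dp * E * Sp)) + C * Sp) * Cᵀ := by
    rw [hUdef, hWdef, transpose_fromCols, fromCols_mul_fromBlocks,
      fromCols_mul_fromRows]
  rw [hUW, transpose_sub, transpose_mul, transpose_mul, hDpt]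
  simp only [Matrix.mul_add, Matrix.add_mul, Matrix.mul_sub, Matrix.sub_mul, Matrix.mul_neg,
    Matrix.neg_mul, ← Matrix.mul_assoc]
  abel
end

section
/- Monotonicity of the Riccati step: if 0 ⪯ P̃ ⪯ P (i.e., P - P̃ ⪰ 0) and the stage cost matrix Q = [[Qx,Qxw],[Qxwᵀ,Qw]] is PSD, then the Riccati step outputs satisfy R(P̃) ⪯ R(P), where R(P) := (Qx + AᵀPA) - (Qxw + AᵀPB)(Qw + BᵀPB)†(Qxw + AᵀPB)ᵀ, provided P - P̃ = VC†Vᵀ for some C ⪰ 0 with range(Vᵀ) ⊆ range(C). -/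
open Matrix

/-- Uniqueness of the Moore–Penrose pseudoinverse. -/
lemma MP_unique {α : Type*} [Fintype α] [DecidableEq α] {D X Y : Matrix α α ℝ}
    (hX : IsMP D X) (hY : IsMP D Y) : X = Y := by
  obtain ⟨hX1, hX2, hX3, hX4⟩ := hX
  obtain ⟨hY1, hY2, hY3, hY4⟩ := hY
  have h1 : X * D = Y * D := by
    calc X * D = (X * D)ᵀ := hX4.symm
      _ = Dᵀ * Xᵀ := transpose_mul _ _
      _ = (D * Y * D)ᵀ * Xᵀ := by rw [hY1]
      _ = (Y * D)ᵀ * (X * D)ᵀ := by simp only [transpose_mul]; simp [Matrix.mul_assoc]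
      _ = (Y * D) * (X * D) := by rw [hY4, hX4]
      _ = Y * (D * X * D) := by simp only [Matrix.mul_assoc]
      _ = Y * D := by rw [hX1]
  have h2 : D * X = D * Y := by
    calc D * X = (D * X)ᵀ := hX3.symm
      _ = Xᵀ * Dᵀ := transpose_mul _ _
      _ = Xᵀ * (D * Y * D)ᵀ := by rw [hY1]
      _ = (D * X)ᵀ * (D * Y)ᵀ := by simp only [transpose_mul]; simp [Matrix.mul_assoc]
      _ = (D * X) * (D * Y) := by rw [hY3, hX3]
      _ = (D * X * D) * Y := by simp only [Matrix.mul_assoc]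
      _ = D * Y := by rw [hX1]
  calc X = X * D * X := hX2.symm
    _ = X * (D * Y) := by rw [Matrix.mul_assoc, h2]
    _ = (X * D) * Y := by rw [Matrix.mul_assoc]
    _ = (Y * D) * Y := by rw [h1]
    _ = Y := hY2

/-- The pseudoinverse of a symmetric matrix is symmetric. -/
lemma MP_symm {α : Type*} [Fintype α] [DecidableEq α] {D X : Matrix α α ℝ}
    (hD : Dᵀ = D) (hX : IsMP D X) : Xᵀ = X := by
  obtain ⟨h1, h2, h3, h4⟩ := hX
  refine MP_unique ⟨?_, ?_, ?_, ?_⟩ ⟨h1, h2, h3, h4⟩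
  · calc D * Xᵀ * D = (Dᵀ * X * Dᵀ)ᵀ := by simp [transpose_mul, Matrix.mul_assoc]
      _ = (D * X * D)ᵀ := by rw [hD]
      _ = Dᵀ := by rw [h1]
      _ = D := hD
  · calc Xᵀ * D * Xᵀ = (X * Dᵀ * X)ᵀ := by simp [transpose_mul, Matrix.mul_assoc]
      _ = (X * D * X)ᵀ := by rw [hD]
      _ = Xᵀ := by rw [h2]
  · calc (D * Xᵀ)ᵀ = X * Dᵀ := by simp [transpose_mul]
      _ = X * D := by rw [hD]
      _ = (X * D)ᵀ := h4.symm
      _ = Dᵀ * Xᵀ := transpose_mul _ _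
      _ = D * Xᵀ := by rw [hD]
  · calc (Xᵀ * D)ᵀ = Dᵀ * X := by simp [transpose_mul]
      _ = D * X := by rw [hD]
      _ = (D * X)ᵀ := h3.symm
      _ = Xᵀ * Dᵀ := transpose_mul _ _
      _ = Xᵀ * D := by rw [hD]

/-- Range condition for PSD block matrices: the off-diagonal block is
killed by the kernel projector of the lower-right block. -/
lemma range_cond {ν μ : Type*} [Fintype ν] [Fintype μ] [DecidableEq μ]
    {X : Matrix ν ν ℝ} {g : Matrix ν μ ℝ} {h : Matrix μ ν ℝ}
    {G Gp : Matrix μ μ ℝ} (hM : (fromBlocks X g h G).PosSemidef) (hGp : IsMP G Gp) :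
    g * (Gp * G) = g := by
  have hGN : G * (1 - Gp * G) = 0 := by
    rw [Matrix.mul_sub, Matrix.mul_one, ← Matrix.mul_assoc, hGp.1, sub_self]
  have key : ∀ y : μ → ℝ, g *ᵥ ((1 - Gp * G) *ᵥ y) = 0 := by
    intro y
    set w : μ → ℝ := (1 - Gp * G) *ᵥ y with hw
    set z : ν ⊕ μ → ℝ := Sum.elim 0 w with hz
    have hmv : (fromBlocks X g h G) *ᵥ z = Sum.elim (g *ᵥ w) 0 := by
      rw [hz, fromBlocks_mulVec]
      simp [hw, mulVec_mulVec, hGN]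
    have h0 : star z ⬝ᵥ (fromBlocks X g h G) *ᵥ z = 0 := by
      rw [hmv, hz]
      simp [Function.star_sumElim, sumElim_dotProduct_sumElim]
    have hz0 := (hM.dotProduct_mulVec_zero_iff z).mp h0
    funext i
    have h2 := congrFun hz0 (Sum.inl i)
    rw [hz, fromBlocks_mulVec] at h2
    simpa using h2
  have hzero : g * (1 - Gp * G) = 0 := by
    ext i j
    have := congrFun (key (Pi.single j 1)) i
    rw [mulVec_mulVec] at this
    simpa [mulVec_single] using this
  have hsub : g - g * (Gp * G) = 0 := by
    rw [Matrix.mul_sub, Matrix.mul_one] at hzero; exact hzero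
  exact (sub_eq_zero.mp hsub).symm

/-- Conjugating a block matrix by `[1; -G⁺gᵀ]` yields the (pseudo-)Schur complement. -/
lemma schur_conj {ν μ : Type*} [Fintype ν] [Fintype μ] [DecidableEq ν]
    (X : Matrix ν ν ℝ) (g : Matrix ν μ ℝ) (G Gp : Matrix μ μ ℝ)
    (h2 : Gp * G * Gp = Gp) (hs : Gpᵀ = Gp) :
    (fromRows (1 : Matrix ν ν ℝ) (-(Gp * gᵀ)))ᵀ * fromBlocks X g gᵀ G *
      fromRows 1 (-(Gp * gᵀ)) = X - g * Gp * gᵀ := by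
  rw [transpose_fromRows, transpose_one, transpose_neg, transpose_mul, hs,
    fromCols_mul_fromBlocks]
  erw [fromCols_mul_fromRows]
  have key : g * Gp * G * (Gp * gᵀ) = g * (Gp * gᵀ) := by
    calc g * Gp * G * (Gp * gᵀ) = g * (Gp * G * Gp) * gᵀ := by
          simp only [Matrix.mul_assoc]
      _ = g * (Gp * gᵀ) := by rw [h2, Matrix.mul_assoc]
  simp only [Matrix.one_mul, Matrix.mul_one, Matrix.neg_mul, Matrix.mul_neg, neg_neg,
    Matrix.add_mul, Matrix.mul_add, transpose_transpose]
  rw [key]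
  simp [sub_eq_add_neg, Matrix.mul_assoc]

theorem riccati_step_monotone {n m k : ℕ}
    (A : Matrix (Fin n) (Fin n) ℝ) (B : Matrix (Fin n) (Fin m) ℝ)
    (P Pt : Matrix (Fin n) (Fin n) ℝ)
    (Qx : Matrix (Fin n) (Fin n) ℝ) (Qxw : Matrix (Fin n) (Fin m) ℝ)
    (Qw : Matrix (Fin m) (Fin m) ℝ)
    (V : Matrix (Fin n) (Fin k) ℝ) (C Cp : Matrix (Fin k) (Fin k) ℝ)
    (Gp Gtp : Matrix (Fin m) (Fin m) ℝ)
    (hQ : (Matrix.fromBlocks Qx Qxw Qxwᵀ Qw).PosSemidef)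
    (hP : P.PosSemidef) (hPt : Pt.PosSemidef)
    (hC : C.PosSemidef)
    (hV : ∃ Y : Matrix (Fin k) (Fin n) ℝ, Vᵀ = C * Y)
    (hCp : IsMP C Cp)
    (hdiff : P - Pt = V * Cp * Vᵀ)
    (hGp : IsMP (Qw + Bᵀ * P * B) Gp)
    (hGtp : IsMP (Qw + Bᵀ * Pt * B) Gtp) :
    (((Qx + Aᵀ * P * A) - (Qxw + Aᵀ * P * B) * Gp * (Qxw + Aᵀ * P * B)ᵀ) -
      ((Qx + Aᵀ * Pt * A) -
        (Qxw + Aᵀ * Pt * B) * Gtp * (Qxw + Aᵀ * Pt * B)ᵀ)).PosSemidef := by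
  classical
  -- basic symmetry facts
  have hPs : Pᵀ = P := by
    have := hP.1.eq; rwa [conjTranspose_eq_transpose_of_trivial] at this
  have hPts : Ptᵀ = Pt := by
    have := hPt.1.eq; rwa [conjTranspose_eq_transpose_of_trivial] at this
  have hCs : Cᵀ = C := by
    have := hC.1.eq; rwa [conjTranspose_eq_transpose_of_trivial] at this
  have hQw : Qwᵀ = Qw := by
    have h := hQ.1.eq
    rw [conjTranspose_eq_transpose_of_trivial, fromBlocks_transpose] at h
    have := congrArg Matrix.toBlocks₂₂ h
    simpa using this
  set J : Matrix (Fin n) (Fin n ⊕ Fin m) ℝ := fromCols A B with hJ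
  have hJconj : ∀ S : Matrix (Fin n) (Fin n) ℝ,
      Jᵀ * S * J = fromBlocks (Aᵀ*S*A) (Aᵀ*S*B) (Bᵀ*S*A) (Bᵀ*S*B) := by
    intro S
    rw [hJ, transpose_fromCols, fromRows_mul, fromRows_mul_fromCols]
  set X := Qx + Aᵀ * P * A with hX
  set Xt := Qx + Aᵀ * Pt * A with hXt
  set g := Qxw + Aᵀ * P * B with hg
  set gt := Qxw + Aᵀ * Pt * B with hgt
  set G := Qw + Bᵀ * P * B with hG
  set Gt := Qw + Bᵀ * Pt * B with hGt
  have hgT : gᵀ = Qxwᵀ + Bᵀ * P * A := by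
    rw [hg]; simp [transpose_add, transpose_mul, hPs, Matrix.mul_assoc]
  have hgtT : gtᵀ = Qxwᵀ + Bᵀ * Pt * A := by
    rw [hgt]; simp [transpose_add, transpose_mul, hPts, Matrix.mul_assoc]
  have hMP : fromBlocks Qx Qxw Qxwᵀ Qw + Jᵀ * P * J = fromBlocks X g gᵀ G := by
    rw [hJconj, fromBlocks_add, hgT]
  have hMPt : fromBlocks Qx Qxw Qxwᵀ Qw + Jᵀ * Pt * J = fromBlocks Xt gt gtᵀ Gt := by
    rw [hJconj, fromBlocks_add, hgtT]
  have hMPpsd : (fromBlocks X g gᵀ G).PosSemidef := by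
    rw [← hMP]
    refine hQ.add ?_
    have := hP.conjTranspose_mul_mul_same J
    rwa [conjTranspose_eq_transpose_of_trivial] at this
  have hMPtpsd : (fromBlocks Xt gt gtᵀ Gt).PosSemidef := by
    rw [← hMPt]
    refine hQ.add ?_
    have := hPt.conjTranspose_mul_mul_same J
    rwa [conjTranspose_eq_transpose_of_trivial] at this
  have hGs : Gᵀ = G := by
    rw [hG]; simp [transpose_add, transpose_mul, hPs, hQw, Matrix.mul_assoc]
  have hGts : Gtᵀ = Gt := by
    rw [hGt]; simp [transpose_add, transpose_mul, hPts, hQw, Matrix.mul_assoc]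
  have hGps : Gpᵀ = Gp := MP_symm hGs hGp
  have hGtps : Gtpᵀ = Gtp := MP_symm hGts hGtp
  have hCps : Cpᵀ = Cp := MP_symm hCs hCp
  -- PSD of the difference, conjugated by J
  have hdiffPSD : (Jᵀ * (P - Pt) * J).PosSemidef := by
    rw [hdiff]
    have hCppsd : Cp.PosSemidef := by
      have e : Cp = Cp * C * Cpᴴ := by
        rw [conjTranspose_eq_transpose_of_trivial, hCps]; exact hCp.2.1.symm
      rw [e]; exact hC.mul_mul_conjTranspose_same Cp
    have h1 : (V * Cp * Vᵀ).PosSemidef := by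
      have := hCppsd.mul_mul_conjTranspose_same V
      rwa [conjTranspose_eq_transpose_of_trivial] at this
    have := h1.conjTranspose_mul_mul_same J
    rwa [conjTranspose_eq_transpose_of_trivial] at this
  have hrange : gt * (Gtp * Gt) = gt := range_cond hMPtpsd hGtp
  set K := fromRows (1 : Matrix (Fin n) (Fin n) ℝ) (-(Gp * gᵀ)) with hK
  set Kt := fromRows (1 : Matrix (Fin n) (Fin n) ℝ) (-(Gtp * gtᵀ)) with hKt
  have e1 : Kᵀ * (fromBlocks X g gᵀ G) * K = X - g * Gp * gᵀ :=
    schur_conj X g G Gp hGp.2.1 hGps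
  have e2 : Ktᵀ * (fromBlocks Xt gt gtᵀ Gt) * Kt = Xt - gt * Gtp * gtᵀ :=
    schur_conj Xt gt Gt Gtp hGtp.2.1 hGtps
  have hKd : K - Kt = fromRows 0 (Gtp * gtᵀ - Gp * gᵀ) := by
    rw [hK, hKt]
    ext (i | i) j <;> simp <;> ring
  have e3 : Ktᵀ * (fromBlocks Xt gt gtᵀ Gt) * (K - Kt) = 0 := by
    rw [hKd, Matrix.mul_assoc, fromBlocks_mul_fromRows, hKt, transpose_fromRows,
      transpose_one, transpose_neg, transpose_mul, hGtps, fromCols_mul_fromRows]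
    simp only [Matrix.mul_zero, zero_add, Matrix.one_mul, Matrix.neg_mul, transpose_transpose]
    have hkey : gt * Gtp * (Gt * (Gtp * gtᵀ - Gp * gᵀ)) = gt * (Gtp * gtᵀ - Gp * gᵀ) := by
      calc gt * Gtp * (Gt * (Gtp * gtᵀ - Gp * gᵀ))
          = gt * (Gtp * Gt) * (Gtp * gtᵀ - Gp * gᵀ) := by simp only [Matrix.mul_assoc]
        _ = gt * (Gtp * gtᵀ - Gp * gᵀ) := by rw [hrange]
    rw [hkey]
    simp
  have hMts : (fromBlocks Xt gt gtᵀ Gt)ᵀ = (fromBlocks Xt gt gtᵀ Gt) := by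
    have := hMPtpsd.1.eq
    rwa [conjTranspose_eq_transpose_of_trivial] at this
  have h5 : Ktᵀ * (fromBlocks Xt gt gtᵀ Gt) * K = Ktᵀ * (fromBlocks Xt gt gtᵀ Gt) * Kt := by
    have h := e3
    rw [Matrix.mul_sub] at h
    exact sub_eq_zero.mp h
  have e4 : Kᵀ * (fromBlocks Xt gt gtᵀ Gt) * Kt = Ktᵀ * (fromBlocks Xt gt gtᵀ Gt) * Kt := by
    calc Kᵀ * (fromBlocks Xt gt gtᵀ Gt) * Kt = (Ktᵀ * (fromBlocks Xt gt gtᵀ Gt)ᵀ * K)ᵀ := by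
          simp [transpose_mul, Matrix.mul_assoc]
      _ = (Ktᵀ * (fromBlocks Xt gt gtᵀ Gt) * K)ᵀ := by rw [hMts]
      _ = (Ktᵀ * (fromBlocks Xt gt gtᵀ Gt) * Kt)ᵀ := by rw [h5]
      _ = Ktᵀ * (fromBlocks Xt gt gtᵀ Gt)ᵀ * Kt := by simp [transpose_mul, Matrix.mul_assoc]
      _ = Ktᵀ * (fromBlocks Xt gt gtᵀ Gt) * Kt := by rw [hMts]
  have e5 : (K - Kt)ᵀ * (fromBlocks Xt gt gtᵀ Gt) * (K - Kt) = Kᵀ * (fromBlocks Xt gt gtᵀ Gt) * K - Ktᵀ * (fromBlocks Xt gt gtᵀ Gt) * Kt := by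
    have expand : (K - Kt)ᵀ * (fromBlocks Xt gt gtᵀ Gt) * (K - Kt)
        = Kᵀ * (fromBlocks Xt gt gtᵀ Gt) * K - Ktᵀ * (fromBlocks Xt gt gtᵀ Gt) * K - (Kᵀ * (fromBlocks Xt gt gtᵀ Gt) * Kt - Ktᵀ * (fromBlocks Xt gt gtᵀ Gt) * Kt) := by
      simp only [transpose_sub, Matrix.sub_mul, Matrix.mul_sub]
    rw [expand, e4, h5]
    abel
  have hMdiff : (fromBlocks X g gᵀ G) - (fromBlocks Xt gt gtᵀ Gt) = Jᵀ * (P - Pt) * J := by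
    rw [← hMP, ← hMPt]
    have : Jᵀ * (P - Pt) * J = Jᵀ * P * J - Jᵀ * Pt * J := by
      rw [Matrix.mul_sub, Matrix.sub_mul]
    rw [this]
    abel
  have final : (X - g * Gp * gᵀ) - (Xt - gt * Gtp * gtᵀ)
      = Kᵀ * (Jᵀ * (P - Pt) * J) * K + (K - Kt)ᵀ * (fromBlocks Xt gt gtᵀ Gt) * (K - Kt) := by
    rw [← e1, ← e2, e5, ← hMdiff, Matrix.mul_sub, Matrix.sub_mul]
    abel
  rw [final]
  refine PosSemidef.add ?_ ?_
  · have := hdiffPSD.conjTranspose_mul_mul_same K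
    rwa [conjTranspose_eq_transpose_of_trivial] at this
  · have := hMPtpsd.conjTranspose_mul_mul_same (K - Kt)
    rwa [conjTranspose_eq_transpose_of_trivial] at this
end
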